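/- Let T be a subset of Fin (n+1) with σ·T = T, and suppose that the cardinality of T ∩ E is odd. Then {T' ∈ O(T) | σ·T' = T'} = {T, τ′·T} and τ′·T ≠ T. In particular the set of σ-invariant elements of O(T) has exactly two elements, which are interchanged by τ′, so its quotient by the action of τ′ is a singleton. -/

import Mathlib

open Fin.NatCast

/-- Vertices of the affine Dynkin diagram of type `D_n` are identified with
`Fin (n+1) = {0, 1, …, n}`. `sigmaD n` is the transposition exchanging `n-1` and `n`
(the unramified Galois involution). -/
def sigmaD (n : ℕ) : Fin (n + 1) → Fin (n + 1) := fun i =>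
  if (i : ℕ) = n - 1 then (↑n : Fin (n + 1))
  else if (i : ℕ) = n then (↑(n - 1) : Fin (n + 1))
  else i

/-- `tauPrimeD n` exchanges `0` with `1` and `n-1` with `n`, fixing all other vertices
(the generator of `Ξ`). -/
def tauPrimeD (n : ℕ) : Fin (n + 1) → Fin (n + 1) := fun i =>
  if (i : ℕ) = 0 then (↑(1 : ℕ) : Fin (n + 1))
  else if (i : ℕ) = 1 then (↑(0 : ℕ) : Fin (n + 1))
  else if (i : ℕ) = n - 1 then (↑n : Fin (n + 1))
  else if (i : ℕ) = n then (↑(n - 1) : Fin (n + 1))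
  else i

/-- `tauD n` is the involution with `τ(0) = n-1`, `τ(1) = n`, `τ(n-1) = 0`, `τ(n) = 1` and
`τ(i) = n - i` for `2 ≤ i ≤ n-2`. -/
def tauD (n : ℕ) : Fin (n + 1) → Fin (n + 1) := fun i =>
  if (i : ℕ) = 0 then (↑(n - 1) : Fin (n + 1))
  else if (i : ℕ) = 1 then (↑n : Fin (n + 1))
  else if (i : ℕ) = n - 1 then (↑(0 : ℕ) : Fin (n + 1))
  else if (i : ℕ) = n then (↑(1 : ℕ) : Fin (n + 1))
  else (↑(n - (i : ℕ)) : Fin (n + 1))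

/-- The extremal vertices `{0, 1, n-1, n}` of the affine Dynkin diagram of type `D_n`. -/
def extremalD (n : ℕ) : Set (Fin (n + 1)) :=
  {(↑(0 : ℕ) : Fin (n + 1)), (↑(1 : ℕ) : Fin (n + 1)), (↑(n - 1) : Fin (n + 1)),
    (↑n : Fin (n + 1))}

/-- The orbit `O(T) = {T, τ·T, τ′·T, (τ∘τ′)·T}` of a type `T` under the Klein four-group
`{id, τ, τ′, τ∘τ′}` (realizing `Ξ^nr`), acting on subsets by images. -/
def orbD (n : ℕ) (T : Set (Fin (n + 1))) : Set (Set (Fin (n + 1))) :=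
  {T, tauD n '' T, tauPrimeD n '' T, (tauD n ∘ tauPrimeD n) '' T}

section
variable {n : ℕ}

lemma vcast (hn : 4 ≤ n) {k : ℕ} (hk : k ≤ n) : ((k : Fin (n+1)) : ℕ) = k :=
  Fin.val_cast_of_lt (by omega)

lemma sig_val (hn : 4 ≤ n) (i : Fin (n+1)) :
    (sigmaD n i : ℕ) = if (i : ℕ) = n - 1 then n else if (i : ℕ) = n then n - 1 else i := by
  unfold sigmaD
  split_ifs <;> first | rfl | exact vcast hn (by omega)

lemma tp_val (hn : 4 ≤ n) (i : Fin (n+1)) :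
    (tauPrimeD n i : ℕ) = if (i : ℕ) = 0 then 1 else if (i : ℕ) = 1 then 0
      else if (i : ℕ) = n - 1 then n else if (i : ℕ) = n then n - 1 else i := by
  unfold tauPrimeD
  split_ifs <;> first | rfl | exact vcast hn (by omega)

lemma tau_val (hn : 4 ≤ n) (i : Fin (n+1)) :
    (tauD n i : ℕ) = if (i : ℕ) = 0 then n - 1 else if (i : ℕ) = 1 then n
      else if (i : ℕ) = n - 1 then 0 else if (i : ℕ) = n then 1 else n - (i : ℕ) := by
  unfold tauD
  split_ifs <;> first | rfl | exact vcast hn (by omega)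

lemma sig_invol (hn : 4 ≤ n) (i : Fin (n+1)) : sigmaD n (sigmaD n i) = i := by
  have hi := i.isLt
  rw [Fin.ext_iff, sig_val hn, sig_val hn]
  split_ifs <;> first | omega | exact (‹False›).elim

lemma tp_invol (hn : 4 ≤ n) (i : Fin (n+1)) : tauPrimeD n (tauPrimeD n i) = i := by
  have hi := i.isLt
  rw [Fin.ext_iff, tp_val hn, tp_val hn]
  split_ifs <;> first | omega | exact (‹False›).elim

lemma tau_invol (hn : 4 ≤ n) (i : Fin (n+1)) : tauD n (tauD n i) = i := by
  have hi := i.isLt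
  rw [Fin.ext_iff, tau_val hn, tau_val hn]
  split_ifs <;> first | omega | exact (‹False›).elim

lemma sig_tp_comm (hn : 4 ≤ n) : sigmaD n ∘ tauPrimeD n = tauPrimeD n ∘ sigmaD n := by
  funext i
  have hi := i.isLt
  rw [Fin.ext_iff]
  show (sigmaD n (tauPrimeD n i) : ℕ) = (tauPrimeD n (sigmaD n i) : ℕ)
  rw [sig_val hn, tp_val hn, tp_val hn, sig_val hn]
  split_ifs <;> first | omega | exact (‹False›).elim

lemma sig_c (hn : 4 ≤ n) : sigmaD n (↑(n-1) : Fin (n+1)) = (↑n : Fin (n+1)) := by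
  rw [Fin.ext_iff, sig_val hn, vcast hn (Nat.sub_le n 1), vcast hn (le_refl n)]
  split_ifs <;> first | omega | exact (‹False›).elim

lemma tp_a (hn : 4 ≤ n) : tauPrimeD n (↑(0:ℕ) : Fin (n+1)) = (↑(1:ℕ) : Fin (n+1)) := by
  rw [Fin.ext_iff, tp_val hn, vcast hn (show (0:ℕ) ≤ n by omega),
    vcast hn (show (1:ℕ) ≤ n by omega)]
  split_ifs <;> first | omega | exact (‹False›).elim

lemma tp_b (hn : 4 ≤ n) : tauPrimeD n (↑(1:ℕ) : Fin (n+1)) = (↑(0:ℕ) : Fin (n+1)) := by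
  rw [Fin.ext_iff, tp_val hn, vcast hn (show (1:ℕ) ≤ n by omega),
    vcast hn (show (0:ℕ) ≤ n by omega)]
  split_ifs <;> first | omega | exact (‹False›).elim

lemma tau_c (hn : 4 ≤ n) : tauD n (↑(n-1) : Fin (n+1)) = (↑(0:ℕ) : Fin (n+1)) := by
  rw [Fin.ext_iff, tau_val hn, vcast hn (Nat.sub_le n 1), vcast hn (show (0:ℕ) ≤ n by omega)]
  split_ifs <;> first | omega | exact (‹False›).elim

lemma tau_d (hn : 4 ≤ n) : tauD n (↑n : Fin (n+1)) = (↑(1:ℕ) : Fin (n+1)) := by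
  rw [Fin.ext_iff, tau_val hn, vcast hn (le_refl n), vcast hn (show (1:ℕ) ≤ n by omega)]
  split_ifs <;> first | omega | exact (‹False›).elim

lemma mem_image_invol {f : Fin (n+1) → Fin (n+1)} (hf : ∀ x, f (f x) = x)
    {S : Set (Fin (n+1))} {i : Fin (n+1)} : i ∈ f '' S ↔ f i ∈ S := by
  constructor
  · rintro ⟨x, hx, rfl⟩; rwa [hf]
  · intro h; exact ⟨f i, h, hf i⟩

lemma cast_ne (hn : 4 ≤ n) {j k : ℕ} (hj : j ≤ n) (hk : k ≤ n) (h : j ≠ k) :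
    (↑j : Fin (n+1)) ≠ (↑k : Fin (n+1)) := by
  intro he
  have := congrArg Fin.val he
  rw [vcast hn hj, vcast hn hk] at this
  exact h this

end

set_option maxHeartbeats 1000000 in
/-- Type `²D_n` (`n ≥ 4`): if `T` is a `σ`-invariant type such that `T ∩ E` has odd
cardinality (where `E` is the set of extremal vertices), then the `σ`-invariant elements of
the orbit `O(T)` are exactly `{T, τ′·T}`, and these two elements are distinct and
interchanged by `τ′`; so the set of `σ`-invariant elements of `O(T)` has exactly two
elements and its quotient by the action of `τ′` is a singleton. -/
theorem stmt11 (n : ℕ) (hn : 4 ≤ n) (T : Set (Fin (n + 1)))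
    (hσ : sigmaD n '' T = T)
    (hE : Odd (T ∩ extremalD n).ncard) :
    {T' ∈ orbD n T | sigmaD n '' T' = T'} = {T, tauPrimeD n '' T} ∧
    tauPrimeD n '' T ≠ T ∧
    tauPrimeD n '' (tauPrimeD n '' T) = T ∧
    {T' ∈ orbD n T | sigmaD n '' T' = T'}.ncard = 2 := by
  have d01 : (↑(0:ℕ) : Fin (n+1)) ≠ ↑(1:ℕ) := cast_ne hn (by omega) (by omega) (by omega)
  have d0c : (↑(0:ℕ) : Fin (n+1)) ≠ ↑(n-1) := cast_ne hn (by omega) (by omega) (by omega)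
  have d0d : (↑(0:ℕ) : Fin (n+1)) ≠ ↑n := cast_ne hn (by omega) (by omega) (by omega)
  have d1c : (↑(1:ℕ) : Fin (n+1)) ≠ ↑(n-1) := cast_ne hn (by omega) (by omega) (by omega)
  have d1d : (↑(1:ℕ) : Fin (n+1)) ≠ ↑n := cast_ne hn (by omega) (by omega) (by omega)
  have dcd : (↑(n-1) : Fin (n+1)) ≠ ↑n := cast_ne hn (by omega) (by omega) (by omega)
  have hcd : ((↑(n-1) : Fin (n+1)) ∈ T ↔ (↑n : Fin (n+1)) ∈ T) := by
    conv_lhs => rw [← hσ]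
    rw [mem_image_invol (sig_invol hn), sig_c hn]
  -- exactly one of 0, 1 lies in T
  have hab : ((↑(0:ℕ) : Fin (n+1)) ∈ T ↔ (↑(1:ℕ) : Fin (n+1)) ∉ T) := by
    by_cases h0 : (↑(0:ℕ) : Fin (n+1)) ∈ T <;> by_cases h1 : (↑(1:ℕ) : Fin (n+1)) ∈ T
    · exfalso
      by_cases hc : (↑(n-1) : Fin (n+1)) ∈ T
      · have hd := hcd.mp hc
        have hTE : T ∩ extremalD n
            = {(↑(0:ℕ) : Fin (n+1)), ↑(1:ℕ), ↑(n-1), ↑n} := by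
          apply subset_antisymm
          · exact fun x hx => hx.2
          · intro x hx
            simp only [Set.mem_insert_iff, Set.mem_singleton_iff] at hx
            rcases hx with rfl|rfl|rfl|rfl <;>
              exact ⟨by assumption, by simp [extremalD]⟩
        have m0 : (↑(0:ℕ) : Fin (n+1)) ∉ ({↑(1:ℕ), ↑(n-1), ↑n} : Set (Fin (n+1))) := by
          simp only [Set.mem_insert_iff, Set.mem_singleton_iff]
          push_neg
          exact ⟨d01, d0c, d0d⟩
        have m1 : (↑(1:ℕ) : Fin (n+1)) ∉ ({↑(n-1), ↑n} : Set (Fin (n+1))) := by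
          simp only [Set.mem_insert_iff, Set.mem_singleton_iff]
          push_neg
          exact ⟨d1c, d1d⟩
        rw [hTE, Set.ncard_insert_of_notMem m0,
          Set.ncard_insert_of_notMem m1, Set.ncard_pair dcd] at hE
        rcases hE with ⟨k, hk⟩; omega
      · have hd : (↑n : Fin (n+1)) ∉ T := fun h => hc (hcd.mpr h)
        have hTE : T ∩ extremalD n = {(↑(0:ℕ) : Fin (n+1)), ↑(1:ℕ)} := by
          apply subset_antisymm
          · rintro x ⟨hxT, hxE⟩
            simp only [extremalD, Set.mem_insert_iff, Set.mem_singleton_iff] at hxE ⊢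
            rcases hxE with rfl|rfl|rfl|rfl
            · exact Or.inl rfl
            · exact Or.inr rfl
            · exact absurd hxT hc
            · exact absurd hxT hd
          · intro x hx
            simp only [Set.mem_insert_iff, Set.mem_singleton_iff] at hx
            rcases hx with rfl|rfl
            · exact ⟨h0, by simp [extremalD]⟩
            · exact ⟨h1, by simp [extremalD]⟩
        rw [hTE, Set.ncard_pair d01] at hE
        rcases hE with ⟨k, hk⟩; omega
    · exact iff_of_true h0 h1
    · exact iff_of_false h0 (not_not_intro h1)
    · exfalso
      by_cases hc : (↑(n-1) : Fin (n+1)) ∈ T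
      · have hd := hcd.mp hc
        have hTE : T ∩ extremalD n = {(↑(n-1) : Fin (n+1)), ↑n} := by
          apply subset_antisymm
          · rintro x ⟨hxT, hxE⟩
            simp only [extremalD, Set.mem_insert_iff, Set.mem_singleton_iff] at hxE ⊢
            rcases hxE with rfl|rfl|rfl|rfl
            · exact absurd hxT h0
            · exact absurd hxT h1
            · exact Or.inl rfl
            · exact Or.inr rfl
          · intro x hx
            simp only [Set.mem_insert_iff, Set.mem_singleton_iff] at hx
            rcases hx with rfl|rfl
            · exact ⟨hc, by simp [extremalD]⟩
            · exact ⟨hd, by simp [extremalD]⟩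
        rw [hTE, Set.ncard_pair dcd] at hE
        rcases hE with ⟨k, hk⟩; omega
      · have hd : (↑n : Fin (n+1)) ∉ T := fun h => hc (hcd.mpr h)
        have hTE : T ∩ extremalD n = (∅ : Set (Fin (n+1))) := by
          apply Set.eq_empty_iff_forall_notMem.mpr
          rintro x ⟨hxT, hxE⟩
          simp only [extremalD, Set.mem_insert_iff, Set.mem_singleton_iff] at hxE
          rcases hxE with rfl|rfl|rfl|rfl
          · exact h0 hxT
          · exact h1 hxT
          · exact hc hxT
          · exact hd hxT
        rw [hTE, Set.ncard_empty] at hE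
        rcases hE with ⟨k, hk⟩; omega
  -- the same holds for τ′ · T
  have hab' : ((↑(0:ℕ) : Fin (n+1)) ∈ tauPrimeD n '' T ↔
      (↑(1:ℕ) : Fin (n+1)) ∉ tauPrimeD n '' T) := by
    rw [mem_image_invol (tp_invol hn), mem_image_invol (tp_invol hn), tp_a hn, tp_b hn]
    tauto
  -- τ · S is never σ-invariant when exactly one of 0, 1 is in S
  have key : ∀ S : Set (Fin (n+1)),
      ((↑(0:ℕ) : Fin (n+1)) ∈ S ↔ (↑(1:ℕ) : Fin (n+1)) ∉ S) →
      sigmaD n '' (tauD n '' S) ≠ tauD n '' S := by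
    intro S hS he
    have h1 : ((↑(n-1) : Fin (n+1)) ∈ tauD n '' S ↔ (↑(0:ℕ) : Fin (n+1)) ∈ S) := by
      rw [mem_image_invol (tau_invol hn), tau_c hn]
    have h2 : ((↑n : Fin (n+1)) ∈ tauD n '' S ↔ (↑(1:ℕ) : Fin (n+1)) ∈ S) := by
      rw [mem_image_invol (tau_invol hn), tau_d hn]
    have h3 : ((↑(n-1) : Fin (n+1)) ∈ tauD n '' S ↔ (↑n : Fin (n+1)) ∈ tauD n '' S) := by
      conv_lhs => rw [← he]
      rw [mem_image_invol (sig_invol hn), sig_c hn]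
    tauto
  have hinv' : sigmaD n '' (tauPrimeD n '' T) = tauPrimeD n '' T := by
    rw [← Set.image_comp, sig_tp_comm hn, Set.image_comp, hσ]
  have hne : tauPrimeD n '' T ≠ T := by
    intro h
    have h2 : ((↑(0:ℕ) : Fin (n+1)) ∈ tauPrimeD n '' T ↔ (↑(1:ℕ) : Fin (n+1)) ∈ T) := by
      rw [mem_image_invol (tp_invol hn), tp_a hn]
    rw [h] at h2
    tauto
  have hgoal1 : {T' ∈ orbD n T | sigmaD n '' T' = T'} = {T, tauPrimeD n '' T} := by
    ext S
    simp only [Set.mem_setOf_eq, orbD, Set.mem_insert_iff, Set.mem_singleton_iff]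
    constructor
    · rintro ⟨(rfl|rfl|rfl|rfl), hS⟩
      · exact Or.inl rfl
      · exact absurd hS (key T hab)
      · exact Or.inr rfl
      · exfalso
        rw [Set.image_comp] at hS
        exact key (tauPrimeD n '' T) hab' hS
    · rintro (rfl|rfl)
      · exact ⟨Or.inl rfl, hσ⟩
      · exact ⟨Or.inr (Or.inr (Or.inl rfl)), hinv'⟩
  have hgoal3 : tauPrimeD n '' (tauPrimeD n '' T) = T := by
    rw [← Set.image_comp]
    have hcomp : tauPrimeD n ∘ tauPrimeD n = id := funext (tp_invol hn)
    rw [hcomp, Set.image_id]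
  exact ⟨hgoal1, hne, hgoal3, by rw [hgoal1, Set.ncard_pair (Ne.symm hne)]⟩
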